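/- Let S be a countable set and let S_1 ⊆ S_2 ⊆ ⋯ be finite subsets with ⋃_n S_n = S. For each n ∈ ℕ and i ∈ {1,2}, let ν_{i,n} be a monotone probability measure on {0,1}^{S_n} assigning positive probability to every configuration, and let μ_{i,n} be the probability measure on {0,1}^S obtained as the pushforward of ν_{i,n} under the map extending a configuration on S_n by the value 0 on S∖S_n. Assume μ_{1,n} → μ_1 and μ_{2,n} → μ_2 weakly. Set A_n := inf over s ∈ S_n and ξ ∈ {0,1}^{S_n∖{s}} of [ν_{2,n}(σ(s)=1 | σ ≡ ξ on S_n∖{s}) − ν_{1,n}(σ(s)=1 | σ ≡ ξ on S_n∖{s})]. If inf_n A_n > 0, then there exists ε > 0 such that μ_1 ≼ μ_2^{(-,ε)} and μ_1^{(+,ε)} ≼ μ_2. -/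

import Mathlib

/-!
Configurations on a countable set `S` are `η : S → Bool` (`true` = 1, `false` = 0), with
the product topology and product σ-algebra. The measures `μ^{(-,ε)}` and `μ^{(+,ε)}` are
characterized by their values on the generating π-systems of cylinder events
`{η ≡ 1 on F}` (resp. `{η ≡ 0 on F}`), `F` finite: if `X ∼ μ` and, independently,
`Z = (Z s)` is i.i.d. with `P(Z s = 1) = 1 - ε`, then the law `ν` of `s ↦ min (X s) (Z s)`
satisfies `ν{η ≡ 1 on F} = (1-ε)^{|F|} μ{η ≡ 1 on F}`, and this determines `ν` uniquely
among Borel probability measures; dually for `max` with `P(Z s = 1) = ε`.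
-/

open MeasureTheory Filter Topology

variable {S : Type*} [Countable S]

/-- Stochastic domination `μ ≼ ν`: `∫ f dμ ≤ ∫ f dν` for every bounded continuous `f`
that is nondecreasing with respect to the coordinatewise partial order. -/
def StochDom (μ ν : Measure (S → Bool)) : Prop :=
  ∀ f : (S → Bool) → ℝ, Continuous f → (∃ C, ∀ x, |f x| ≤ C) → Monotone f →
    ∫ x, f x ∂μ ≤ ∫ x, f x ∂ν

/-- Weak convergence `μₙ → μ`: convergence of the integrals of all bounded continuous
functions. -/
def WeakConv (μn : ℕ → Measure (S → Bool)) (μ : Measure (S → Bool)) : Prop :=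
  ∀ f : (S → Bool) → ℝ, Continuous f → (∃ C, ∀ x, |f x| ≤ C) →
    Tendsto (fun n => ∫ x, f x ∂(μn n)) atTop (𝓝 (∫ x, f x ∂μ))

/-- `ν = μ^{(-,ε)}`: `ν` is the law of `s ↦ min (X s) (Z s)`, `X ∼ μ`, `Z` an independent
i.i.d. field with `P(Z s = 1) = 1 - ε`, characterized on the cylinders `{η ≡ 1 on F}`. -/
def IsMinusEps (μ ν : Measure (S → Bool)) (ε : ℝ) : Prop :=
  ∀ F : Finset S,
    ν {η | ∀ s ∈ F, η s = true} =
      ENNReal.ofReal ((1 - ε) ^ F.card) * μ {η | ∀ s ∈ F, η s = true}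

/-- `ν = μ^{(+,ε)}`: `ν` is the law of `s ↦ max (X s) (Z s)`, `X ∼ μ`, `Z` an independent
i.i.d. field with `P(Z s = 1) = ε`, characterized on the cylinders `{η ≡ 0 on F}`. -/
def IsPlusEps (μ ν : Measure (S → Bool)) (ε : ℝ) : Prop :=
  ∀ F : Finset S,
    ν {η | ∀ s ∈ F, η s = false} =
      ENNReal.ofReal ((1 - ε) ^ F.card) * μ {η | ∀ s ∈ F, η s = false}

variable [DecidableEq S]

/-- The conditional probability `ν(σ(s) = 1 | σ ≡ ξ off s)` for a weight function `ν` on the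
configurations of a finite set. -/
noncomputable def condOne {I : Type*} [DecidableEq I] [Fintype I]
    (ν : (I → Bool) → ℝ) (s : I) (ξ : I → Bool) : ℝ :=
  ν (Function.update ξ s true) /
    (ν (Function.update ξ s true) + ν (Function.update ξ s false))

/-- `ν` is a probability weight assigning positive probability to every configuration. -/
def IsProbWeight {I : Type*} [DecidableEq I] [Fintype I] (ν : (I → Bool) → ℝ) : Prop :=
  (∀ σ, 0 < ν σ) ∧ ∑ σ : I → Bool, ν σ = 1

/-- `ν` is monotone: the conditional probability of a 1 at `s` is nondecreasing in the
configuration off `s`. -/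
def IsMonotoneWeight {I : Type*} [DecidableEq I] [Fintype I] (ν : (I → Bool) → ℝ) : Prop :=
  ∀ s : I, ∀ ξ ξ' : I → Bool, (∀ t, t ≠ s → ξ t ≤ ξ' t) →
    condOne ν s ξ ≤ condOne ν s ξ'

/-- Extension of a configuration on the finite set `F` by `0` outside `F`. -/
def extendCfg (F : Finset S) (τ : F → Bool) : S → Bool :=
  fun s => if h : s ∈ F then τ ⟨s, h⟩ else false

/-- The pushforward to `{0,1}^S` of a weight function on `{0,1}^F`, `F ⊆ S` finite, under
the map extending a configuration by `0` off `F`. -/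
noncomputable def pushCfg (F : Finset S) (ν : (F → Bool) → ℝ) : Measure (S → Bool) :=
  ∑ τ : F → Bool, ENNReal.ofReal (ν τ) • Measure.dirac (extendCfg F τ)


section FiniteAux
open Finset Function
variable {I : Type*} [Fintype I] [DecidableEq I]

/-- i.i.d. product weight on `I → Bool` with `P(z t = 1) = 1 - ε`. -/
noncomputable def bern (ε : ℝ) (z : I → Bool) : ℝ := ∏ t, if z t then 1 - ε else ε

/-- weight of the law of `x ⊓ z`. -/
noncomputable def minusW (ν : (I → Bool) → ℝ) (ε : ℝ) (σ : I → Bool) : ℝ :=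
  ∑ x : I → Bool, ∑ z : I → Bool, if x ⊓ z = σ then ν x * bern ε z else 0

/-- weight of the law of `x ⊔ z`, with `P(z t = 1) = ε`. -/
noncomputable def plusW (ν : (I → Bool) → ℝ) (ε : ℝ) (σ : I → Bool) : ℝ :=
  ∑ x : I → Bool, ∑ z : I → Bool, if x ⊔ z = σ then ν x * bern (1 - ε) z else 0

lemma sum_pi_bool (w : I → Bool → ℝ) :
    ∑ z : I → Bool, ∏ t, w t (z t) = ∏ t, (w t true + w t false) := by
  classical
  have h := Finset.prod_univ_sum (fun _ : I => (univ : Finset Bool)) (fun i j => w i j)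
  rw [Fintype.piFinset_univ] at h
  rw [← h]
  refine Finset.prod_congr rfl fun t _ => ?_
  rw [show (univ : Finset Bool) = {true, false} by rfl]
  simp

lemma sum_bern_cyl (δ : ℝ) (v : Bool) (F : Finset I) :
    ∑ z : I → Bool, (if (∀ t ∈ F, z t = v) then bern δ z else 0)
      = (if v then 1 - δ else δ) ^ F.card := by
  classical
  set w : I → Bool → ℝ := fun t b =>
    if t ∈ F then (if b = v then (if b then 1 - δ else δ) else 0)
      else (if b then 1 - δ else δ) with hw
  have key : ∀ z : I → Bool,
      (if (∀ t ∈ F, z t = v) then bern δ z else 0) = ∏ t, w t (z t) := by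
    intro z
    by_cases h : ∀ t ∈ F, z t = v
    · rw [if_pos h]
      unfold bern
      refine Finset.prod_congr rfl fun t _ => ?_
      by_cases ht : t ∈ F
      · simp [hw, ht, h t ht]
      · simp [hw, ht]
    · rw [if_neg h]
      push_neg at h
      obtain ⟨t₀, ht₀, hzt₀⟩ := h
      exact (Finset.prod_eq_zero (mem_univ t₀) (by simp [hw, ht₀, hzt₀])).symm
  rw [Finset.sum_congr rfl fun z _ => key z]
  rw [sum_pi_bool w]
  have hconst : ∀ t : I, (w t true + w t false) = if t ∈ F then (if v then 1 - δ else δ) else 1 := by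
    intro t
    by_cases ht : t ∈ F <;> cases v <;> simp [hw, ht]
  rw [Finset.prod_congr rfl fun t _ => hconst t]
  rw [Finset.prod_ite_mem, Finset.univ_inter, Finset.prod_const]

lemma ite_zero_mul_ite_zero' {P Q : Prop} [Decidable P] [Decidable Q] (u v : ℝ) :
    (if P ∧ Q then u * v else 0) = (if P then u else 0) * (if Q then v else 0) := by
  by_cases hP : P <;> by_cases hQ : Q <;> simp [hP, hQ]

lemma minusW_cyl (ν : (I → Bool) → ℝ) (ε : ℝ) (F : Finset I) :
    ∑ σ : I → Bool, (if (∀ t ∈ F, σ t = true) then minusW ν ε σ else 0)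
      = (1 - ε) ^ F.card * ∑ x : I → Bool, (if (∀ t ∈ F, x t = true) then ν x else 0) := by
  classical
  have step1 : ∀ σ : I → Bool, (if (∀ t ∈ F, σ t = true) then minusW ν ε σ else 0)
      = ∑ x : I → Bool, ∑ z : I → Bool,
          (if x ⊓ z = σ then (if (∀ t ∈ F, σ t = true) then ν x * bern ε z else 0) else 0) := by
    intro σ
    by_cases h : ∀ t ∈ F, σ t = true
    · rw [if_pos h]; unfold minusW
      refine Finset.sum_congr rfl fun x _ => Finset.sum_congr rfl fun z _ => ?_
      simp only [if_pos h]
    · rw [if_neg h]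
      symm
      refine Finset.sum_eq_zero fun x _ => Finset.sum_eq_zero fun z _ => ?_
      by_cases hxz : x ⊓ z = σ <;> simp [hxz, h]
  simp only [step1]
  rw [Finset.sum_comm]
  have step2 : ∀ x : I → Bool, (∑ σ : I → Bool, ∑ z : I → Bool,
      (if x ⊓ z = σ then (if (∀ t ∈ F, σ t = true) then ν x * bern ε z else 0) else 0))
      = ∑ z : I → Bool, (if (∀ t ∈ F, (x ⊓ z) t = true) then ν x * bern ε z else 0) := by
    intro x
    rw [Finset.sum_comm]
    refine Finset.sum_congr rfl fun z _ => ?_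
    rw [Finset.sum_ite_eq univ (x ⊓ z) (fun σ => if (∀ t ∈ F, σ t = true) then ν x * bern ε z else 0)]
    simp
  simp only [step2]
  have step3 : ∀ (x z : I → Bool), (if (∀ t ∈ F, (x ⊓ z) t = true) then ν x * bern ε z else 0)
      = (if (∀ t ∈ F, x t = true) then ν x else 0) * (if (∀ t ∈ F, z t = true) then bern ε z else 0) := by
    intro x z
    rw [← ite_zero_mul_ite_zero']
    congr 1
    simp only [eq_iff_iff]
    constructor
    · intro h
      constructor <;> intro t ht <;> have := h t ht <;> simp [Pi.inf_apply] at this <;>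
        [exact this.1; exact this.2]
    · intro ⟨h1, h2⟩ t ht
      simp [Pi.inf_apply, h1 t ht, h2 t ht]
  simp only [step3]
  rw [← Finset.sum_mul_sum]
  rw [sum_bern_cyl]
  simp [mul_comm]

lemma plusW_cyl (ν : (I → Bool) → ℝ) (ε : ℝ) (F : Finset I) :
    ∑ σ : I → Bool, (if (∀ t ∈ F, σ t = false) then plusW ν ε σ else 0)
      = (1 - ε) ^ F.card * ∑ x : I → Bool, (if (∀ t ∈ F, x t = false) then ν x else 0) := by
  classical
  have step1 : ∀ σ : I → Bool, (if (∀ t ∈ F, σ t = false) then plusW ν ε σ else 0)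
      = ∑ x : I → Bool, ∑ z : I → Bool,
          (if x ⊔ z = σ then (if (∀ t ∈ F, σ t = false) then ν x * bern (1-ε) z else 0) else 0) := by
    intro σ
    by_cases h : ∀ t ∈ F, σ t = false
    · rw [if_pos h]; unfold plusW
      refine Finset.sum_congr rfl fun x _ => Finset.sum_congr rfl fun z _ => ?_
      simp only [if_pos h]
    · rw [if_neg h]
      symm
      refine Finset.sum_eq_zero fun x _ => Finset.sum_eq_zero fun z _ => ?_
      by_cases hxz : x ⊔ z = σ <;> simp [hxz, h]
  simp only [step1]
  rw [Finset.sum_comm]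
  have step2 : ∀ x : I → Bool, (∑ σ : I → Bool, ∑ z : I → Bool,
      (if x ⊔ z = σ then (if (∀ t ∈ F, σ t = false) then ν x * bern (1-ε) z else 0) else 0))
      = ∑ z : I → Bool, (if (∀ t ∈ F, (x ⊔ z) t = false) then ν x * bern (1-ε) z else 0) := by
    intro x
    rw [Finset.sum_comm]
    refine Finset.sum_congr rfl fun z _ => ?_
    rw [Finset.sum_ite_eq univ (x ⊔ z) (fun σ => if (∀ t ∈ F, σ t = false) then ν x * bern (1-ε) z else 0)]
    simp
  simp only [step2]
  have step3 : ∀ (x z : I → Bool), (if (∀ t ∈ F, (x ⊔ z) t = false) then ν x * bern (1-ε) z else 0)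
      = (if (∀ t ∈ F, x t = false) then ν x else 0) * (if (∀ t ∈ F, z t = false) then bern (1-ε) z else 0) := by
    intro x z
    rw [← ite_zero_mul_ite_zero']
    congr 1
    simp only [eq_iff_iff]
    constructor
    · intro h
      constructor <;> intro t ht <;> have := h t ht <;> simp [Pi.sup_apply] at this <;>
        [exact this.1; exact this.2]
    · intro ⟨h1, h2⟩ t ht
      simp [Pi.sup_apply, h1 t ht, h2 t ht]
  simp only [step3]
  rw [← Finset.sum_mul_sum]
  rw [sum_bern_cyl]
  simp [mul_comm]

lemma sum_minusW (ν : (I → Bool) → ℝ) (ε : ℝ) :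
    ∑ σ : I → Bool, minusW ν ε σ = ∑ x : I → Bool, ν x := by
  have := minusW_cyl ν ε (∅ : Finset I)
  simpa using this

lemma sum_plusW (ν : (I → Bool) → ℝ) (ε : ℝ) :
    ∑ σ : I → Bool, plusW ν ε σ = ∑ x : I → Bool, ν x := by
  have := plusW_cyl ν ε (∅ : Finset I)
  simpa using this

lemma bern_pos {ε : ℝ} (h0 : 0 < ε) (h1 : ε < 1) (z : I → Bool) : 0 < bern ε z := by
  unfold bern
  refine Finset.prod_pos fun t _ => ?_
  split <;> linarith

lemma minusW_pos {ν : (I → Bool) → ℝ} (hν : ∀ x, 0 < ν x) {ε : ℝ} (h0 : 0 < ε) (h1 : ε < 1)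
    (σ : I → Bool) : 0 < minusW ν ε σ := by
  unfold minusW
  have hterm : ∀ x ∈ (univ : Finset (I → Bool)), 0 ≤ ∑ z : I → Bool,
      (if x ⊓ z = σ then ν x * bern ε z else 0) := by
    intro x _
    refine Finset.sum_nonneg fun z _ => ?_
    split
    · exact le_of_lt (mul_pos (hν x) (bern_pos h0 h1 z))
    · exact le_rfl
  refine Finset.sum_pos' hterm ⟨σ, mem_univ σ, ?_⟩
  have hterm2 : ∀ z ∈ (univ : Finset (I → Bool)), (0:ℝ) ≤ (if σ ⊓ z = σ then ν σ * bern ε z else 0) := by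
    intro z _
    split
    · exact le_of_lt (mul_pos (hν σ) (bern_pos h0 h1 z))
    · exact le_rfl
  refine Finset.sum_pos' hterm2 ⟨σ, mem_univ σ, ?_⟩
  rw [if_pos (inf_idem σ)]
  exact mul_pos (hν σ) (bern_pos h0 h1 σ)

lemma plusW_pos {ν : (I → Bool) → ℝ} (hν : ∀ x, 0 < ν x) {ε : ℝ} (h0 : 0 < ε) (h1 : ε < 1)
    (σ : I → Bool) : 0 < plusW ν ε σ := by
  unfold plusW
  have hb : ∀ z : I → Bool, 0 < bern (1 - ε) z := bern_pos (by linarith) (by linarith)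
  have hterm : ∀ x ∈ (univ : Finset (I → Bool)), 0 ≤ ∑ z : I → Bool,
      (if x ⊔ z = σ then ν x * bern (1 - ε) z else 0) := by
    intro x _
    refine Finset.sum_nonneg fun z _ => ?_
    split
    · exact le_of_lt (mul_pos (hν x) (hb z))
    · exact le_rfl
  refine Finset.sum_pos' hterm ⟨σ, mem_univ σ, ?_⟩
  have hterm2 : ∀ z ∈ (univ : Finset (I → Bool)), (0:ℝ) ≤ (if σ ⊔ z = σ then ν σ * bern (1-ε) z else 0) := by
    intro z _
    split
    · exact le_of_lt (mul_pos (hν σ) (hb z))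
    · exact le_rfl
  refine Finset.sum_pos' hterm2 ⟨σ, mem_univ σ, ?_⟩
  rw [if_pos (sup_idem σ)]
  exact mul_pos (hν σ) (hb σ)

lemma minusW_nonneg {ν : (I → Bool) → ℝ} (hν : ∀ x, 0 ≤ ν x) {ε : ℝ} (h0 : 0 ≤ ε) (h1 : ε ≤ 1)
    (σ : I → Bool) : 0 ≤ minusW ν ε σ := by
  refine Finset.sum_nonneg fun x _ => Finset.sum_nonneg fun z _ => ?_
  split
  · refine mul_nonneg (hν x) (Finset.prod_nonneg fun t _ => ?_)
    split <;> linarith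
  · exact le_rfl

lemma plusW_nonneg {ν : (I → Bool) → ℝ} (hν : ∀ x, 0 ≤ ν x) {ε : ℝ} (h0 : 0 ≤ ε) (h1 : ε ≤ 1)
    (σ : I → Bool) : 0 ≤ plusW ν ε σ := by
  refine Finset.sum_nonneg fun x _ => Finset.sum_nonneg fun z _ => ?_
  split
  · refine mul_nonneg (hν x) (Finset.prod_nonneg fun t _ => ?_)
    split <;> linarith
  · exact le_rfl

/-- Assemble a configuration from a value at `s` and a configuration off `s`. -/
def Dfun (s : I) (c : Bool) (x' : {t : I // t ≠ s} → Bool) : I → Bool :=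
  fun t => if h : t = s then c else x' ⟨t, h⟩

lemma Dfun_s (s : I) (c : Bool) (x' : {t : I // t ≠ s} → Bool) : Dfun s c x' s = c := dif_pos rfl

lemma Dfun_ne (s : I) (c : Bool) (x' : {t : I // t ≠ s} → Bool) {t : I} (h : t ≠ s) :
    Dfun s c x' t = x' ⟨t, h⟩ := dif_neg h

lemma update_Dfun (s : I) (c b : Bool) (x' : {t : I // t ≠ s} → Bool) :
    Function.update (Dfun s c x') s b = Dfun s b x' := by
  ext t
  rcases eq_or_ne t s with rfl | h
  · rw [Function.update_self, Dfun_s]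
  · rw [Function.update_of_ne h, Dfun_ne _ _ _ h, Dfun_ne _ _ _ h]

lemma Dfun_bijective (s : I) :
    Function.Bijective (fun p : Bool × ({t : I // t ≠ s} → Bool) => Dfun s p.1 p.2) := by
  constructor
  · rintro ⟨c, x'⟩ ⟨d, z'⟩ h
    simp only at h
    simp only [Prod.mk.injEq]
    constructor
    · have := congrFun h s
      rwa [Dfun_s, Dfun_s] at this
    · ext t'
      have := congrFun h t'.1
      rwa [Dfun_ne _ _ _ t'.2, Dfun_ne _ _ _ t'.2] at this
  · intro x
    refine ⟨⟨x s, fun t' => x t'.1⟩, ?_⟩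
    simp only
    ext t
    rcases eq_or_ne t s with rfl | h
    · rw [Dfun_s]
    · rw [Dfun_ne _ _ _ h]

/-- Split a sum over configurations according to the value at `s`. -/
lemma sum_split (s : I) (F : (I → Bool) → ℝ) :
    ∑ x : I → Bool, F x
      = (∑ x' : {t : I // t ≠ s} → Bool, F (Dfun s true x'))
        + ∑ x' : {t : I // t ≠ s} → Bool, F (Dfun s false x') := by
  rw [← Fintype.sum_bijective _ (Dfun_bijective s) _ F (fun p => rfl)]
  rw [Fintype.sum_prod_type]
  rw [Fintype.sum_bool]

/-- The product weight on configurations off `s`. -/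
noncomputable def bernJ (δ : ℝ) (s : I) (z' : {t : I // t ≠ s} → Bool) : ℝ :=
  ∏ t' : {t : I // t ≠ s}, if z' t' then 1 - δ else δ

lemma bern_Dfun (δ : ℝ) (s : I) (d : Bool) (z' : {t : I // t ≠ s} → Bool) :
    bern δ (Dfun s d z') = (if d then 1 - δ else δ) * bernJ δ s z' := by
  unfold bern bernJ
  rw [← Finset.mul_prod_erase univ _ (mem_univ s), Dfun_s]
  congr 1
  rw [Finset.prod_subtype (univ.erase s) (p := fun t => t ≠ s)
    (fun t => by simp [Finset.mem_erase])]
  refine Finset.prod_congr rfl fun t' _ => ?_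
  rw [Dfun_ne _ _ _ t'.2]

/-- Restriction of a configuration to the complement of `s`. -/
def offRes (s : I) (ζ : I → Bool) : {t : I // t ≠ s} → Bool := fun t' => ζ t'.1

lemma Dfun_inf_eq_update_iff (s : I) (c d b : Bool) (x' z' : {t : I // t ≠ s} → Bool)
    (ζ : I → Bool) :
    (Dfun s c x' ⊓ Dfun s d z' = Function.update ζ s b)
      ↔ (c ⊓ d = b ∧ x' ⊓ z' = offRes s ζ) := by
  constructor
  · intro h
    constructor
    · have := congrFun h s
      simpa [Pi.inf_apply, Dfun_s, Function.update_self] using this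
    · ext t'
      have := congrFun h t'.1
      rw [Pi.inf_apply, Dfun_ne _ _ _ t'.2, Dfun_ne _ _ _ t'.2,
        Function.update_of_ne t'.2] at this
      simpa [Pi.inf_apply, offRes] using this
  · rintro ⟨h1, h2⟩
    ext t
    rcases eq_or_ne t s with rfl | h
    · rw [Pi.inf_apply, Dfun_s, Dfun_s, Function.update_self]; exact h1
    · rw [Pi.inf_apply, Dfun_ne _ _ _ h, Dfun_ne _ _ _ h, Function.update_of_ne h]
      have := congrFun h2 ⟨t, h⟩
      simpa [Pi.inf_apply, offRes] using this

lemma Dfun_sup_eq_update_iff (s : I) (c d b : Bool) (x' z' : {t : I // t ≠ s} → Bool)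
    (ζ : I → Bool) :
    (Dfun s c x' ⊔ Dfun s d z' = Function.update ζ s b)
      ↔ (c ⊔ d = b ∧ x' ⊔ z' = offRes s ζ) := by
  constructor
  · intro h
    constructor
    · have := congrFun h s
      simpa [Pi.sup_apply, Dfun_s, Function.update_self] using this
    · ext t'
      have := congrFun h t'.1
      rw [Pi.sup_apply, Dfun_ne _ _ _ t'.2, Dfun_ne _ _ _ t'.2,
        Function.update_of_ne t'.2] at this
      simpa [Pi.sup_apply, offRes] using this
  · rintro ⟨h1, h2⟩
    ext t
    rcases eq_or_ne t s with rfl | h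
    · rw [Pi.sup_apply, Dfun_s, Dfun_s, Function.update_self]; exact h1
    · rw [Pi.sup_apply, Dfun_ne _ _ _ h, Dfun_ne _ _ _ h, Function.update_of_ne h]
      have := congrFun h2 ⟨t, h⟩
      simpa [Pi.sup_apply, offRes] using this

noncomputable def Wmin (ε : ℝ) (s : I) (ζ : I → Bool) (x' : {t : I // t ≠ s} → Bool) : ℝ :=
  ∑ z' : {t : I // t ≠ s} → Bool, if x' ⊓ z' = offRes s ζ then bernJ ε s z' else 0

noncomputable def Smin (ν : (I → Bool) → ℝ) (ε : ℝ) (s : I) (ζ : I → Bool) (a : Bool) : ℝ :=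
  ∑ x' : {t : I // t ≠ s} → Bool, ν (Dfun s a x') * Wmin ε s ζ x'

noncomputable def Wplus (ε : ℝ) (s : I) (ζ : I → Bool) (x' : {t : I // t ≠ s} → Bool) : ℝ :=
  ∑ z' : {t : I // t ≠ s} → Bool, if x' ⊔ z' = offRes s ζ then bernJ (1 - ε) s z' else 0

noncomputable def Splus (ν : (I → Bool) → ℝ) (ε : ℝ) (s : I) (ζ : I → Bool) (a : Bool) : ℝ :=
  ∑ x' : {t : I // t ≠ s} → Bool, ν (Dfun s a x') * Wplus ε s ζ x'

lemma inner_minus (ν : (I → Bool) → ℝ) (ε : ℝ) (s : I) (ζ : I → Bool) (c d b : Bool) :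
    (∑ x' : {t : I // t ≠ s} → Bool, ∑ z' : {t : I // t ≠ s} → Bool,
      (if Dfun s c x' ⊓ Dfun s d z' = Function.update ζ s b
        then ν (Dfun s c x') * bern ε (Dfun s d z') else 0))
    = if c ⊓ d = b then (if d then 1 - ε else ε) * Smin ν ε s ζ c else 0 := by
  by_cases hcd : c ⊓ d = b
  · rw [if_pos hcd]
    have hterm : ∀ x' z' : {t : I // t ≠ s} → Bool,
        (if Dfun s c x' ⊓ Dfun s d z' = Function.update ζ s b
          then ν (Dfun s c x') * bern ε (Dfun s d z') else 0)
        = (if d then 1 - ε else ε) *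
            (ν (Dfun s c x') * (if x' ⊓ z' = offRes s ζ then bernJ ε s z' else 0)) := by
      intro x' z'
      by_cases h : x' ⊓ z' = offRes s ζ
      · rw [if_pos ((Dfun_inf_eq_update_iff s c d b x' z' ζ).2 ⟨hcd, h⟩), if_pos h, bern_Dfun]
        ring
      · rw [if_neg, if_neg h, mul_zero, mul_zero]
        rw [Dfun_inf_eq_update_iff]
        tauto
    simp only [hterm, ← Finset.mul_sum]
    unfold Smin Wmin
    rw [Finset.mul_sum]
  · rw [if_neg hcd]
    refine Finset.sum_eq_zero fun x' _ => Finset.sum_eq_zero fun z' _ => ?_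
    rw [if_neg]
    rw [Dfun_inf_eq_update_iff]
    tauto

lemma inner_plus (ν : (I → Bool) → ℝ) (ε : ℝ) (s : I) (ζ : I → Bool) (c d b : Bool) :
    (∑ x' : {t : I // t ≠ s} → Bool, ∑ z' : {t : I // t ≠ s} → Bool,
      (if Dfun s c x' ⊔ Dfun s d z' = Function.update ζ s b
        then ν (Dfun s c x') * bern (1 - ε) (Dfun s d z') else 0))
    = if c ⊔ d = b then (if d then 1 - (1 - ε) else 1 - ε) * Splus ν ε s ζ c else 0 := by
  by_cases hcd : c ⊔ d = b
  · rw [if_pos hcd]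
    have hterm : ∀ x' z' : {t : I // t ≠ s} → Bool,
        (if Dfun s c x' ⊔ Dfun s d z' = Function.update ζ s b
          then ν (Dfun s c x') * bern (1 - ε) (Dfun s d z') else 0)
        = (if d then 1 - (1 - ε) else 1 - ε) *
            (ν (Dfun s c x') * (if x' ⊔ z' = offRes s ζ then bernJ (1 - ε) s z' else 0)) := by
      intro x' z'
      by_cases h : x' ⊔ z' = offRes s ζ
      · rw [if_pos ((Dfun_sup_eq_update_iff s c d b x' z' ζ).2 ⟨hcd, h⟩), if_pos h, bern_Dfun]
        ring
      · rw [if_neg, if_neg h, mul_zero, mul_zero]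
        rw [Dfun_sup_eq_update_iff]
        tauto
    simp only [hterm, ← Finset.mul_sum]
    unfold Splus Wplus
    rw [Finset.mul_sum]
  · rw [if_neg hcd]
    refine Finset.sum_eq_zero fun x' _ => Finset.sum_eq_zero fun z' _ => ?_
    rw [if_neg]
    rw [Dfun_sup_eq_update_iff]
    tauto

lemma minusW_update_true (ν : (I → Bool) → ℝ) (ε : ℝ) (s : I) (ζ : I → Bool) :
    minusW ν ε (Function.update ζ s true) = (1 - ε) * Smin ν ε s ζ true := by
  unfold minusW
  rw [sum_split s]
  have inner_split : ∀ (c : Bool) (x' : {t : I // t ≠ s} → Bool),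
      (∑ z : I → Bool, if Dfun s c x' ⊓ z = Function.update ζ s true
          then ν (Dfun s c x') * bern ε z else 0)
      = (∑ z' : {t : I // t ≠ s} → Bool, if Dfun s c x' ⊓ Dfun s true z' = Function.update ζ s true
          then ν (Dfun s c x') * bern ε (Dfun s true z') else 0)
        + ∑ z' : {t : I // t ≠ s} → Bool, if Dfun s c x' ⊓ Dfun s false z' = Function.update ζ s true
          then ν (Dfun s c x') * bern ε (Dfun s false z') else 0 :=
    fun c x' => sum_split s _
  simp only [inner_split]
  rw [Finset.sum_add_distrib, Finset.sum_add_distrib]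
  rw [inner_minus ν ε s ζ true true true, inner_minus ν ε s ζ true false true,
      inner_minus ν ε s ζ false true true, inner_minus ν ε s ζ false false true]
  norm_num

lemma minusW_update_false (ν : (I → Bool) → ℝ) (ε : ℝ) (s : I) (ζ : I → Bool) :
    minusW ν ε (Function.update ζ s false)
      = ε * Smin ν ε s ζ true + Smin ν ε s ζ false := by
  unfold minusW
  rw [sum_split s]
  have inner_split : ∀ (c : Bool) (x' : {t : I // t ≠ s} → Bool),
      (∑ z : I → Bool, if Dfun s c x' ⊓ z = Function.update ζ s false
          then ν (Dfun s c x') * bern ε z else 0)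
      = (∑ z' : {t : I // t ≠ s} → Bool, if Dfun s c x' ⊓ Dfun s true z' = Function.update ζ s false
          then ν (Dfun s c x') * bern ε (Dfun s true z') else 0)
        + ∑ z' : {t : I // t ≠ s} → Bool, if Dfun s c x' ⊓ Dfun s false z' = Function.update ζ s false
          then ν (Dfun s c x') * bern ε (Dfun s false z') else 0 :=
    fun c x' => sum_split s _
  simp only [inner_split]
  rw [Finset.sum_add_distrib, Finset.sum_add_distrib]
  rw [inner_minus ν ε s ζ true true false, inner_minus ν ε s ζ true false false,
      inner_minus ν ε s ζ false true false, inner_minus ν ε s ζ false false false]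
  norm_num
  ring

lemma plusW_update_true (ν : (I → Bool) → ℝ) (ε : ℝ) (s : I) (ζ : I → Bool) :
    plusW ν ε (Function.update ζ s true)
      = Splus ν ε s ζ true + ε * Splus ν ε s ζ false := by
  unfold plusW
  rw [sum_split s]
  have inner_split : ∀ (c : Bool) (x' : {t : I // t ≠ s} → Bool),
      (∑ z : I → Bool, if Dfun s c x' ⊔ z = Function.update ζ s true
          then ν (Dfun s c x') * bern (1 - ε) z else 0)
      = (∑ z' : {t : I // t ≠ s} → Bool, if Dfun s c x' ⊔ Dfun s true z' = Function.update ζ s true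
          then ν (Dfun s c x') * bern (1 - ε) (Dfun s true z') else 0)
        + ∑ z' : {t : I // t ≠ s} → Bool, if Dfun s c x' ⊔ Dfun s false z' = Function.update ζ s true
          then ν (Dfun s c x') * bern (1 - ε) (Dfun s false z') else 0 :=
    fun c x' => sum_split s _
  simp only [inner_split]
  rw [Finset.sum_add_distrib, Finset.sum_add_distrib]
  rw [inner_plus ν ε s ζ true true true, inner_plus ν ε s ζ true false true,
      inner_plus ν ε s ζ false true true, inner_plus ν ε s ζ false false true]
  norm_num
  ring

lemma plusW_update_false (ν : (I → Bool) → ℝ) (ε : ℝ) (s : I) (ζ : I → Bool) :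
    plusW ν ε (Function.update ζ s false) = (1 - ε) * Splus ν ε s ζ false := by
  unfold plusW
  rw [sum_split s]
  have inner_split : ∀ (c : Bool) (x' : {t : I // t ≠ s} → Bool),
      (∑ z : I → Bool, if Dfun s c x' ⊔ z = Function.update ζ s false
          then ν (Dfun s c x') * bern (1 - ε) z else 0)
      = (∑ z' : {t : I // t ≠ s} → Bool, if Dfun s c x' ⊔ Dfun s true z' = Function.update ζ s false
          then ν (Dfun s c x') * bern (1 - ε) (Dfun s true z') else 0)
        + ∑ z' : {t : I // t ≠ s} → Bool, if Dfun s c x' ⊔ Dfun s false z' = Function.update ζ s false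
          then ν (Dfun s c x') * bern (1 - ε) (Dfun s false z') else 0 :=
    fun c x' => sum_split s _
  simp only [inner_split]
  rw [Finset.sum_add_distrib, Finset.sum_add_distrib]
  rw [inner_plus ν ε s ζ true true false, inner_plus ν ε s ζ true false false,
      inner_plus ν ε s ζ false true false, inner_plus ν ε s ζ false false false]
  norm_num

lemma scal_minus {a b c d ε : ℝ} (ha : 0 < a) (hb : 0 < b) (hc : 0 < c) (hd : 0 < d)
    (hε : 0 ≤ ε) (h : a / (a + b) + ε ≤ c / (c + d)) :
    a * (ε * c + d) ≤ (1 - ε) * (b * c) := by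
  have hab : 0 < a + b := by linarith
  have hcd : 0 < c + d := by linarith
  rw [div_add' _ _ _ hab.ne', div_le_div_iff₀ hab hcd] at h
  nlinarith [mul_nonneg hε (mul_pos ha hd).le, mul_nonneg hε (mul_pos hb hd).le]

lemma scal_plus {a b c d ε : ℝ} (ha : 0 < a) (hb : 0 < b) (hc : 0 < c) (hd : 0 < d)
    (hε : 0 ≤ ε) (h : a / (a + b) + ε ≤ c / (c + d)) :
    (a + ε * b) * d ≤ (1 - ε) * (b * c) := by
  have hab : 0 < a + b := by linarith
  have hcd : 0 < c + d := by linarith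
  rw [div_add' _ _ _ hab.ne', div_le_div_iff₀ hab hcd] at h
  nlinarith [mul_nonneg hε (mul_pos ha hc).le, mul_nonneg hε (mul_pos ha hd).le]

lemma Wmin_nonneg (ε : ℝ) (h0 : 0 ≤ ε) (h1 : ε ≤ 1) (s : I) (ζ : I → Bool)
    (x' : {t : I // t ≠ s} → Bool) : 0 ≤ Wmin ε s ζ x' := by
  refine Finset.sum_nonneg fun z' _ => ?_
  split
  · exact Finset.prod_nonneg fun t' _ => by split <;> linarith
  · exact le_rfl

lemma Wplus_nonneg (ε : ℝ) (h0 : 0 ≤ ε) (h1 : ε ≤ 1) (s : I) (ζ : I → Bool)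
    (x' : {t : I // t ≠ s} → Bool) : 0 ≤ Wplus ε s ζ x' := by
  refine Finset.sum_nonneg fun z' _ => ?_
  split
  · exact Finset.prod_nonneg fun t' _ => by split <;> linarith
  · exact le_rfl

lemma Wmin_ne_zero_imp {ε : ℝ} {s : I} {ζ : I → Bool} {x' : {t : I // t ≠ s} → Bool}
    (h : Wmin ε s ζ x' ≠ 0) : ∀ t' : {t : I // t ≠ s}, ζ t'.1 ≤ x' t' := by
  obtain ⟨z', _, hz'⟩ := Finset.exists_ne_zero_of_sum_ne_zero h
  have hcond : x' ⊓ z' = offRes s ζ := by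
    by_contra hc
    rw [if_neg hc] at hz'
    exact hz' rfl
  intro t'
  have := congrFun hcond t'
  rw [Pi.inf_apply] at this
  rw [show ζ t'.1 = offRes s ζ t' from rfl, ← this]
  exact inf_le_left

lemma Wplus_ne_zero_imp {ε : ℝ} {s : I} {ζ : I → Bool} {x' : {t : I // t ≠ s} → Bool}
    (h : Wplus ε s ζ x' ≠ 0) : ∀ t' : {t : I // t ≠ s}, x' t' ≤ ζ t'.1 := by
  obtain ⟨z', _, hz'⟩ := Finset.exists_ne_zero_of_sum_ne_zero h
  have hcond : x' ⊔ z' = offRes s ζ := by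
    by_contra hc
    rw [if_neg hc] at hz'
    exact hz' rfl
  intro t'
  have := congrFun hcond t'
  rw [Pi.sup_apply] at this
  rw [show ζ t'.1 = offRes s ζ t' from rfl, ← this]
  exact le_sup_left

lemma ss_minus (ν₁ ν₂ : (I → Bool) → ℝ) (h₁ : ∀ x, 0 < ν₁ x) (h₂ : ∀ x, 0 < ν₂ x)
    (hm₁ : IsMonotoneWeight ν₁) {ε : ℝ} (hε0 : 0 < ε) (hε1 : ε < 1)
    (hgap : ∀ (u : I) (ξ : I → Bool), condOne ν₁ u ξ + ε ≤ condOne ν₂ u ξ)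
    (s : I) (ξ ζ : I → Bool) (hle : ∀ t, t ≠ s → ξ t ≤ ζ t) :
    ν₁ (Function.update ξ s true) * minusW ν₂ ε (Function.update ζ s false)
      ≤ ν₁ (Function.update ξ s false) * minusW ν₂ ε (Function.update ζ s true) := by
  rw [minusW_update_false, minusW_update_true]
  unfold Smin
  set a := ν₁ (Function.update ξ s true) with hA
  set b := ν₁ (Function.update ξ s false) with hB
  have key : ∀ x' : {t : I // t ≠ s} → Bool,
      a * (ε * (ν₂ (Dfun s true x') * Wmin ε s ζ x') + ν₂ (Dfun s false x') * Wmin ε s ζ x')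
        ≤ b * ((1 - ε) * (ν₂ (Dfun s true x') * Wmin ε s ζ x')) := by
    intro x'
    by_cases hW : Wmin ε s ζ x' = 0
    · rw [hW]; ring_nf; exact le_rfl
    · have hWpos : 0 < Wmin ε s ζ x' :=
        lt_of_le_of_ne (Wmin_nonneg ε hε0.le hε1.le s ζ x') (Ne.symm hW)
      have hxge := Wmin_ne_zero_imp hW
      have hmono : condOne ν₁ s ξ ≤ condOne ν₁ s (Dfun s true x') := by
        refine hm₁ s ξ (Dfun s true x') fun t ht => ?_
        rw [Dfun_ne _ _ _ ht]
        exact le_trans (hle t ht) (hxge ⟨t, ht⟩)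
      have hc1 : condOne ν₁ s ξ = a / (a + b) := rfl
      have hc2 : condOne ν₂ s (Dfun s true x')
          = ν₂ (Dfun s true x') / (ν₂ (Dfun s true x') + ν₂ (Dfun s false x')) := by
        unfold condOne
        rw [update_Dfun, update_Dfun]
      have hchain : a / (a + b) + ε
          ≤ ν₂ (Dfun s true x') / (ν₂ (Dfun s true x') + ν₂ (Dfun s false x')) := by
        rw [← hc1, ← hc2]
        linarith [hgap s (Dfun s true x')]
      have hscal := scal_minus (h₁ _) (h₁ _) (h₂ (Dfun s true x')) (h₂ (Dfun s false x'))
        hε0.le hchain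
      calc a * (ε * (ν₂ (Dfun s true x') * Wmin ε s ζ x') + ν₂ (Dfun s false x') * Wmin ε s ζ x')
          = (a * (ε * ν₂ (Dfun s true x') + ν₂ (Dfun s false x'))) * Wmin ε s ζ x' := by ring
        _ ≤ ((1 - ε) * (b * ν₂ (Dfun s true x'))) * Wmin ε s ζ x' :=
            mul_le_mul_of_nonneg_right hscal hWpos.le
        _ = b * ((1 - ε) * (ν₂ (Dfun s true x') * Wmin ε s ζ x')) := by ring
  calc a * (ε * (∑ x', ν₂ (Dfun s true x') * Wmin ε s ζ x')
          + ∑ x', ν₂ (Dfun s false x') * Wmin ε s ζ x')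
      = ∑ x', a * (ε * (ν₂ (Dfun s true x') * Wmin ε s ζ x')
          + ν₂ (Dfun s false x') * Wmin ε s ζ x') := by
        simp only [mul_add, Finset.mul_sum, Finset.sum_add_distrib]
    _ ≤ ∑ x', b * ((1 - ε) * (ν₂ (Dfun s true x') * Wmin ε s ζ x')) :=
        Finset.sum_le_sum fun x' _ => key x'
    _ = b * ((1 - ε) * ∑ x', ν₂ (Dfun s true x') * Wmin ε s ζ x') := by
        simp only [Finset.mul_sum]

lemma ss_plus (ν₁ ν₂ : (I → Bool) → ℝ) (h₁ : ∀ x, 0 < ν₁ x) (h₂ : ∀ x, 0 < ν₂ x)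
    (hm₂ : IsMonotoneWeight ν₂) {ε : ℝ} (hε0 : 0 < ε) (hε1 : ε < 1)
    (hgap : ∀ (u : I) (ξ : I → Bool), condOne ν₁ u ξ + ε ≤ condOne ν₂ u ξ)
    (s : I) (ξ ζ : I → Bool) (hle : ∀ t, t ≠ s → ξ t ≤ ζ t) :
    plusW ν₁ ε (Function.update ξ s true) * ν₂ (Function.update ζ s false)
      ≤ plusW ν₁ ε (Function.update ξ s false) * ν₂ (Function.update ζ s true) := by
  rw [plusW_update_true, plusW_update_false]
  unfold Splus
  set c := ν₂ (Function.update ζ s true) with hC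
  set d := ν₂ (Function.update ζ s false) with hD
  have key : ∀ x' : {t : I // t ≠ s} → Bool,
      (ν₁ (Dfun s true x') * Wplus ε s ξ x' + ε * (ν₁ (Dfun s false x') * Wplus ε s ξ x')) * d
        ≤ (1 - ε) * (ν₁ (Dfun s false x') * Wplus ε s ξ x') * c := by
    intro x'
    by_cases hW : Wplus ε s ξ x' = 0
    · rw [hW]; ring_nf; exact le_rfl
    · have hWpos : 0 < Wplus ε s ξ x' :=
        lt_of_le_of_ne (Wplus_nonneg ε hε0.le hε1.le s ξ x') (Ne.symm hW)
      have hxle := Wplus_ne_zero_imp hW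
      have hmono : condOne ν₂ s (Dfun s true x') ≤ condOne ν₂ s ζ := by
        refine hm₂ s (Dfun s true x') ζ fun t ht => ?_
        rw [Dfun_ne _ _ _ ht]
        exact le_trans (hxle ⟨t, ht⟩) (hle t ht)
      have hc1 : condOne ν₁ s (Dfun s true x')
          = ν₁ (Dfun s true x') / (ν₁ (Dfun s true x') + ν₁ (Dfun s false x')) := by
        unfold condOne
        rw [update_Dfun, update_Dfun]
      have hc2 : condOne ν₂ s ζ = c / (c + d) := by
        unfold condOne
        rw [← hC, ← hD]
      have hchain : ν₁ (Dfun s true x') / (ν₁ (Dfun s true x') + ν₁ (Dfun s false x')) + ε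
          ≤ c / (c + d) := by
        rw [← hc1, ← hc2]
        linarith [hgap s (Dfun s true x')]
      have hscal := scal_plus (h₁ (Dfun s true x')) (h₁ (Dfun s false x'))
        (h₂ (Function.update ζ s true)) (h₂ (Function.update ζ s false)) hε0.le hchain
      calc (ν₁ (Dfun s true x') * Wplus ε s ξ x' + ε * (ν₁ (Dfun s false x') * Wplus ε s ξ x')) * d
          = ((ν₁ (Dfun s true x') + ε * ν₁ (Dfun s false x')) * d) * Wplus ε s ξ x' := by ring
        _ ≤ ((1 - ε) * (ν₁ (Dfun s false x') * c)) * Wplus ε s ξ x' :=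
            mul_le_mul_of_nonneg_right (by
              calc (ν₁ (Dfun s true x') + ε * ν₁ (Dfun s false x')) * d
                  ≤ (1 - ε) * (ν₁ (Dfun s false x') * c) := hscal
              ) hWpos.le
        _ = (1 - ε) * (ν₁ (Dfun s false x') * Wplus ε s ξ x') * c := by ring
  calc (∑ x', ν₁ (Dfun s true x') * Wplus ε s ξ x'
          + ε * ∑ x', ν₁ (Dfun s false x') * Wplus ε s ξ x') * d
      = ∑ x', (ν₁ (Dfun s true x') * Wplus ε s ξ x'
          + ε * (ν₁ (Dfun s false x') * Wplus ε s ξ x')) * d := by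
        simp only [add_mul, Finset.sum_mul, Finset.mul_sum, Finset.sum_add_distrib]
    _ ≤ ∑ x', (1 - ε) * (ν₁ (Dfun s false x') * Wplus ε s ξ x') * c :=
        Finset.sum_le_sum fun x' _ => key x'
    _ = (1 - ε) * (∑ x', ν₁ (Dfun s false x') * Wplus ε s ξ x') * c := by
        simp only [Finset.sum_mul, Finset.mul_sum]

/-- From the single-site Holley condition to the full lattice condition. -/
lemma lattice_of_ss (f g : (I → Bool) → ℝ) (hf : ∀ x, 0 < f x) (hg : ∀ x, 0 < g x)
    (hss : ∀ (s : I) (ξ ζ : I → Bool), (∀ t, t ≠ s → ξ t ≤ ζ t) →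
      f (Function.update ξ s true) * g (Function.update ζ s false)
        ≤ f (Function.update ξ s false) * g (Function.update ζ s true)) :
    ∀ a b : I → Bool, f a * g b ≤ f (a ⊓ b) * g (a ⊔ b) := by
  suffices H : ∀ (n : ℕ) (a b : I → Bool),
      (univ.filter (fun t => a t = true ∧ b t = false)).card = n →
      f a * g b ≤ f (a ⊓ b) * g (a ⊔ b) by
    intro a b
    exact H _ a b rfl
  intro n
  induction n with
  | zero =>
    intro a b hcard
    have hab : a ≤ b := by
      intro t
      have hnot : ¬(a t = true ∧ b t = false) := fun h1 => by
        have ht : t ∈ univ.filter (fun t => a t = true ∧ b t = false) := by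
          simp [Finset.mem_filter, h1]
        rw [Finset.card_eq_zero] at hcard
        rw [hcard] at ht
        exact absurd ht (Finset.notMem_empty t)
      cases ha : a t <;> cases hb : b t
      · exact le_rfl
      · exact Bool.false_le true
      · exact absurd ⟨ha, hb⟩ hnot
      · exact le_rfl
    rw [inf_eq_left.2 hab, sup_eq_right.2 hab]
  | succ n ih =>
    intro a b hcard
    have hne : (univ.filter (fun t => a t = true ∧ b t = false)).Nonempty := by
      rw [← Finset.card_pos, hcard]; omega
    obtain ⟨s, hs⟩ := hne
    rw [Finset.mem_filter] at hs
    obtain ⟨-, has, hbs⟩ := hs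
    set b' := Function.update b s true with hb'
    have hab's : (a ⊓ b) s = false := by
      rw [Pi.inf_apply, has, hbs]; rfl
    have hinf : a ⊓ b' = Function.update (a ⊓ b) s true := by
      ext t
      rcases eq_or_ne t s with rfl | h
      · rw [Pi.inf_apply, hb', Function.update_self, Function.update_self, has]; rfl
      · rw [Pi.inf_apply, hb', Function.update_of_ne h, Function.update_of_ne h, Pi.inf_apply]
    have hsup : a ⊔ b' = a ⊔ b := by
      ext t
      rcases eq_or_ne t s with rfl | h
      · rw [Pi.sup_apply, Pi.sup_apply, hb', Function.update_self, has, hbs]; rfl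
      · rw [Pi.sup_apply, Pi.sup_apply, hb', Function.update_of_ne h]
    have hcard' : (univ.filter (fun t => a t = true ∧ b' t = false)).card = n := by
      have hset : univ.filter (fun t => a t = true ∧ b' t = false)
          = (univ.filter (fun t => a t = true ∧ b t = false)).erase s := by
        ext t
        rcases eq_or_ne t s with rfl | h
        · simp [hb', Function.update_self]
        · simp [hb', Function.update_of_ne h, Finset.mem_erase, h]
      rw [hset, Finset.card_erase_of_mem (by simp [Finset.mem_filter, has, hbs]), hcard]
      omega
    have hIH := ih a b' hcard'
    rw [hinf, hsup] at hIH
    -- hIH : f a * g b' ≤ f (update (a ⊓ b) s true) * g (a ⊔ b)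
    have hssi := hss s (a ⊓ b) b (fun t _ => inf_le_right.trans le_rfl)
    -- hssi : f (update (a⊓b) s true) * g (update b s false) ≤ f (update (a⊓b) s false) * g (update b s true)
    have hub : Function.update b s false = b := by
      rw [← hbs]; exact Function.update_eq_self s b
    have hua : Function.update (a ⊓ b) s false = a ⊓ b := by
      rw [← hab's]; exact Function.update_eq_self s (a ⊓ b)
    rw [hub, hua, ← hb'] at hssi
    -- hssi : f (update (a⊓b) s true) * g b ≤ f (a ⊓ b) * g b'
    have hkey := mul_le_mul hssi hIH
      (mul_nonneg (hf a).le (hg b').le) (mul_nonneg (hf _).le (hg _).le)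
    have hpos : 0 < f (Function.update (a ⊓ b) s true) * g b' :=
      mul_pos (hf _) (hg _)
    nlinarith [hkey, hpos, mul_pos (hf a) (hg b), mul_pos (hf (a ⊓ b)) (hg (a ⊔ b))]

/-- Finite-volume stochastic domination via Holley's inequality. -/
lemma findom (f g : (I → Bool) → ℝ) (hf : ∀ x, 0 < f x) (hg : ∀ x, 0 < g x)
    (hsum : ∑ x : I → Bool, f x = ∑ x : I → Bool, g x)
    (hss : ∀ (s : I) (ξ ζ : I → Bool), (∀ t, t ≠ s → ξ t ≤ ζ t) →
      f (Function.update ξ s true) * g (Function.update ζ s false)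
        ≤ f (Function.update ξ s false) * g (Function.update ζ s true))
    (μ : (I → Bool) → ℝ) (hμ0 : ∀ x, 0 ≤ μ x) (hμ : Monotone μ) :
    ∑ x : I → Bool, μ x * f x ≤ ∑ x : I → Bool, μ x * g x :=
  holley f g μ hμ0 (fun x => (hf x).le) (fun x => (hg x).le) hμ hsum
    (lattice_of_ss f g hf hg hss)

end FiniteAux

open Finset Function

section Cyl
variable {S : Type*} [Countable S] [DecidableEq S]

/-- Indicator of the cylinder event `{η ≡ v on F}`. -/
def cylFn (v : Bool) (F : Finset S) (η : S → Bool) : ℝ := if (∀ s ∈ F, η s = v) then 1 else 0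

lemma cylFn_eq_prod (v : Bool) (F : Finset S) (η : S → Bool) :
    cylFn v F η = ∏ s ∈ F, (if η s = v then (1:ℝ) else 0) := by
  unfold cylFn
  by_cases h : ∀ s ∈ F, η s = v
  · rw [if_pos h, eq_comm]
    exact Finset.prod_eq_one fun s hs => by rw [if_pos (h s hs)]
  · rw [if_neg h, eq_comm]
    push_neg at h
    obtain ⟨s, hs, hη⟩ := h
    exact Finset.prod_eq_zero hs (by rw [if_neg hη])

lemma cylFn_continuous (v : Bool) (F : Finset S) : Continuous (cylFn v F) := by
  have heq : cylFn v F = fun η => ∏ s ∈ F, (if η s = v then (1:ℝ) else 0) :=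
    funext (cylFn_eq_prod v F)
  rw [heq]
  refine continuous_finset_prod F fun s _ => ?_
  exact (continuous_of_discreteTopology (α := Bool)
      (f := fun b => if b = v then (1:ℝ) else 0)).comp (continuous_apply s)

lemma cylFn_bdd (v : Bool) (F : Finset S) (η : S → Bool) : |cylFn v F η| ≤ 1 := by
  unfold cylFn; split <;> norm_num

lemma cylSet_measurable (v : Bool) (F : Finset S) :
    MeasurableSet {η : S → Bool | ∀ s ∈ F, η s = v} := by
  have heq : {η : S → Bool | ∀ s ∈ F, η s = v}
      = ⋂ s ∈ (F : Set S), (fun η : S → Bool => η s) ⁻¹' {v} := by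
    ext; simp
  rw [heq]
  exact MeasurableSet.biInter F.countable_toSet
    (fun s _ => (measurable_pi_apply s) (MeasurableSet.singleton v))

lemma integrable_of_bounded {ν : Measure (S → Bool)} [IsFiniteMeasure ν]
    {h : (S → Bool) → ℝ} (hc : Continuous h) {C : ℝ} (hC : ∀ x, |h x| ≤ C) :
    Integrable h ν := by
  refine (integrable_const C).mono' hc.measurable.aestronglyMeasurable ?_
  exact Filter.Eventually.of_forall fun x => by simpa [Real.norm_eq_abs] using hC x

lemma integral_cylFn (ν : Measure (S → Bool)) (v : Bool) (F : Finset S) :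
    ∫ η, cylFn v F η ∂ν = (ν {η | ∀ s ∈ F, η s = v}).toReal := by
  have heq : cylFn v F = Set.indicator {η : S → Bool | ∀ s ∈ F, η s = v} 1 := by
    funext η
    unfold cylFn
    by_cases h : ∀ s ∈ F, η s = v
    · rw [if_pos h, Set.indicator_of_mem (show η ∈ {η : S → Bool | ∀ s ∈ F, η s = v} from h)]; rfl
    · rw [if_neg h, Set.indicator_of_notMem (show η ∉ {η : S → Bool | ∀ s ∈ F, η s = v} from h)]
  rw [heq]
  exact integral_indicator_one (cylSet_measurable v F)

lemma integral_pushCfg (F : Finset S) (w : (↥F → Bool) → ℝ) (hw : ∀ τ, 0 ≤ w τ)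
    (h : (S → Bool) → ℝ) (hh : Continuous h) (C : ℝ) (hC : ∀ x, |h x| ≤ C) :
    ∫ x, h x ∂(pushCfg F w) = ∑ τ : ↥F → Bool, w τ * h (extendCfg F τ) := by
  unfold pushCfg
  rw [MeasureTheory.integral_finset_sum_measure (fun τ _ => by
    exact Integrable.smul_measure (integrable_of_bounded hh hC) ENNReal.ofReal_ne_top)]
  refine Finset.sum_congr rfl fun τ _ => ?_
  rw [MeasureTheory.integral_smul_measure,
    MeasureTheory.integral_dirac' _ _ hh.measurable.stronglyMeasurable,
    ENNReal.toReal_ofReal (hw τ), smul_eq_mul]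

/-- Spanning: a function depending on finitely many coordinates is a linear combination of
cylinder indicators. -/
lemma span_cyl (v : Bool) (G : Finset S) (φ : (S → Bool) → ℝ)
    (hφ : ∀ η η' : S → Bool, (∀ s ∈ G, η s = η' s) → φ η = φ η') :
    ∃ c : Finset S → ℝ, ∀ η, φ η = ∑ F ∈ G.powerset, c F * cylFn v F η := by
  classical
  induction G using Finset.induction generalizing φ with
  | empty =>
    refine ⟨fun _ => φ (fun _ => false), fun η => ?_⟩
    rw [Finset.powerset_empty, Finset.sum_singleton]
    have : cylFn v ∅ η = 1 := by unfold cylFn; simp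
    rw [this, mul_one]
    exact hφ η (fun _ => false) (by simp)
  | @insert s G₀ hs ih =>
    set φt : (S → Bool) → ℝ := fun η => φ (Function.update η s v) with hφt
    set φf : (S → Bool) → ℝ := fun η => φ (Function.update η s (!v)) with hφf
    have hdept : ∀ η η' : (S → Bool), (∀ u ∈ G₀, η u = η' u) → φt η = φt η' := by
      intro η η' hag
      refine hφ _ _ fun u hu => ?_
      rcases eq_or_ne u s with rfl | h
      · rw [Function.update_self, Function.update_self]
      · rw [Function.update_of_ne h, Function.update_of_ne h]
        exact hag u (Finset.mem_of_mem_insert_of_ne hu h)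
    have hdepf : ∀ η η' : (S → Bool), (∀ u ∈ G₀, η u = η' u) → φf η = φf η' := by
      intro η η' hag
      refine hφ _ _ fun u hu => ?_
      rcases eq_or_ne u s with rfl | h
      · rw [Function.update_self, Function.update_self]
      · rw [Function.update_of_ne h, Function.update_of_ne h]
        exact hag u (Finset.mem_of_mem_insert_of_ne hu h)
    obtain ⟨ct, hct⟩ := ih φt hdept
    obtain ⟨cf, hcf⟩ := ih φf hdepf
    refine ⟨fun F => if s ∈ F then ct (F.erase s) - cf (F.erase s) else cf F, fun η => ?_⟩
    rw [Finset.sum_powerset_insert hs]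
    have hterm1 : ∀ F ∈ G₀.powerset,
        (if s ∈ F then ct (F.erase s) - cf (F.erase s) else cf F) * cylFn v F η
          = cf F * cylFn v F η := by
      intro F hF
      rw [Finset.mem_powerset] at hF
      rw [if_neg (fun hsF => hs (hF hsF))]
    have hterm2 : ∀ F ∈ G₀.powerset,
        (if s ∈ insert s F then ct ((insert s F).erase s) - cf ((insert s F).erase s)
            else cf (insert s F)) * cylFn v (insert s F) η
          = (ct F - cf F) * ((if η s = v then (1:ℝ) else 0) * cylFn v F η) := by
      intro F hF
      rw [Finset.mem_powerset] at hF
      rw [if_pos (Finset.mem_insert_self s F),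
        Finset.erase_insert (fun hsF => hs (hF hsF))]
      congr 1
      unfold cylFn
      by_cases hη : η s = v
      · by_cases hall : ∀ u ∈ F, η u = v
        · have hins : ∀ u ∈ insert s F, η u = v := by
            intro u hu
            rcases Finset.mem_insert.1 hu with rfl | h
            · exact hη
            · exact hall u h
          rw [if_pos hins, if_pos hη, if_pos hall]
          norm_num
        · rw [if_neg (fun hc => hall fun u hu => hc u (Finset.mem_insert_of_mem hu)),
            if_neg hall]
          norm_num
      · rw [if_neg (fun hc => hη (hc s (Finset.mem_insert_self s F))), if_neg hη]
        norm_num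
    rw [Finset.sum_congr rfl hterm1, Finset.sum_congr rfl hterm2]
    have hkey : φ η = φf η + (if η s = v then (1:ℝ) else 0) * (φt η - φf η) := by
      by_cases hη : η s = v
      · rw [if_pos hη]
        have h1 : Function.update η s v = η := by rw [← hη]; exact Function.update_eq_self s η
        rw [hφt, hφf]
        simp only [h1]
        ring
      · rw [if_neg hη]
        have hηs : η s = !v := by
          cases hv : η s <;> cases v <;> simp_all
        have h1 : Function.update η s (!v) = η := by rw [← hηs]; exact Function.update_eq_self s η
        rw [hφf]
        simp only [h1]
        ring
    rw [hkey, hcf η, hct η]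
    have hdist : (if η s = v then (1:ℝ) else 0) *
        ((∑ F ∈ G₀.powerset, ct F * cylFn v F η) - ∑ F ∈ G₀.powerset, cf F * cylFn v F η)
        = ∑ F ∈ G₀.powerset, (ct F - cf F) * ((if η s = v then (1:ℝ) else 0) * cylFn v F η) := by
      rw [← Finset.sum_sub_distrib, Finset.mul_sum]
      exact Finset.sum_congr rfl fun F _ => by ring
    rw [hdist]

end Cyl


section Helpers
variable {S : Type*} [Countable S] [DecidableEq S]

lemma extendCfg_mono (F : Finset S) : Monotone (extendCfg F) := by
  intro τ τ' h s
  unfold extendCfg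
  split
  · exact h _
  · exact le_rfl

lemma cylFn_extendCfg (v : Bool) {F G : Finset S} (hFG : F ⊆ G) (τ : ↥G → Bool) :
    cylFn v F (extendCfg G τ)
      = if (∀ t ∈ Finset.subtype (· ∈ G) F, τ t = v) then (1:ℝ) else 0 := by
  unfold cylFn
  congr 1
  simp only [eq_iff_iff]
  constructor
  · intro h t ht
    rw [Finset.mem_subtype] at ht
    have := h t.1 ht
    unfold extendCfg at this
    rwa [dif_pos t.2] at this
  · intro h s hs
    unfold extendCfg
    rw [dif_pos (hFG hs)]
    exact h ⟨s, hFG hs⟩ (Finset.mem_subtype.2 hs)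

lemma card_subtype_of_subset {F G : Finset S} (hFG : F ⊆ G) :
    (Finset.subtype (· ∈ G) F).card = F.card := by
  rw [Finset.card_subtype, Finset.filter_true_of_mem fun s hs => hFG hs]

lemma sum_w_cylFn_ext {Sn : Finset S} (F : Finset S) (hF : F ⊆ Sn)
    (w : (↥Sn → Bool) → ℝ) (v : Bool) :
    ∑ τ : ↥Sn → Bool, w τ * cylFn v F (extendCfg Sn τ)
      = ∑ τ : ↥Sn → Bool, (if (∀ t ∈ Finset.subtype (· ∈ Sn) F, τ t = v) then w τ else 0) := by
  refine Finset.sum_congr rfl fun τ _ => ?_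
  rw [cylFn_extendCfg v hF τ]
  split
  · rw [mul_one]
  · rw [mul_zero]

lemma unif_approx {f : (S → Bool) → ℝ} (hf : Continuous f) {δ : ℝ} (hδ : 0 < δ) :
    ∃ G : Finset S, ∀ η η' : S → Bool, (∀ s ∈ G, η s = η' s) → |f η - f η'| ≤ δ := by
  classical
  have key : ∀ η : S → Bool, ∃ G : Finset S, ∀ η' : S → Bool,
      (∀ s ∈ G, η' s = η s) → |f η' - f η| < δ / 2 := by
    intro η
    have hopen : IsOpen {x : S → Bool | |f x - f η| < δ / 2} := by
      have : Continuous fun x => |f x - f η| := (hf.sub continuous_const).abs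
      exact isOpen_lt this continuous_const
    have hball : {x : S → Bool | |f x - f η| < δ / 2} ∈ 𝓝 η :=
      hopen.mem_nhds (by simp [hδ])
    rw [nhds_pi, Filter.mem_pi] at hball
    obtain ⟨Iset, hIfin, t, ht, hsub⟩ := hball
    refine ⟨hIfin.toFinset, fun η' hag => ?_⟩
    refine hsub fun s hs => ?_
    have hmem : η s ∈ t s := by
      have h1 := ht s
      rw [nhds_discrete] at h1
      exact h1
    rw [hag s (hIfin.mem_toFinset.2 hs)]
    exact hmem
  choose Gf hGf using key
  have hcov : (Set.univ : Set (S → Bool))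
      ⊆ ⋃ η : S → Bool, {η' : S → Bool | ∀ s ∈ Gf η, η' s = η s} := by
    intro η _
    exact Set.mem_iUnion.2 ⟨η, fun s _ => rfl⟩
  have hopen : ∀ η : S → Bool, IsOpen {η' : S → Bool | ∀ s ∈ Gf η, η' s = η s} := by
    intro η
    have heq : {η' : S → Bool | ∀ s ∈ Gf η, η' s = η s}
        = ⋂ s ∈ Gf η, (fun η' : S → Bool => η' s) ⁻¹' {η s} := by
      ext; simp
    rw [heq]
    exact isOpen_biInter_finset fun s _ =>
      (continuous_apply s).isOpen_preimage _ (isOpen_discrete _)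
  obtain ⟨T, hT⟩ := isCompact_univ.elim_finite_subcover _ hopen hcov
  refine ⟨T.biUnion (fun η => Gf η), fun η₁ η₂ hag => ?_⟩
  have hmem := hT (Set.mem_univ η₁)
  simp only [Set.mem_iUnion] at hmem
  obtain ⟨η₀, hη₀T, hη₀⟩ := hmem
  have h1 := hGf η₀ η₁ hη₀
  have h2 : ∀ s ∈ Gf η₀, η₂ s = η₀ s := fun s hs => by
    rw [← hag s (Finset.mem_biUnion.2 ⟨η₀, hη₀T, hs⟩)]
    exact hη₀ s hs
  have h3 := hGf η₀ η₂ h2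
  calc |f η₁ - f η₂| ≤ |f η₁ - f η₀| + |f η₀ - f η₂| := abs_sub_le _ _ _
    _ ≤ δ := by rw [abs_sub_comm (f η₀) (f η₂)]; linarith

lemma condOne_nonneg {I : Type*} [DecidableEq I] [Fintype I] {ν : (I → Bool) → ℝ}
    (hν : ∀ x, 0 < ν x) (s : I) (ξ : I → Bool) : 0 ≤ condOne ν s ξ :=
  div_nonneg (hν _).le (add_pos (hν _) (hν _)).le

lemma condOne_le_one {I : Type*} [DecidableEq I] [Fintype I] {ν : (I → Bool) → ℝ}
    (hν : ∀ x, 0 < ν x) (s : I) (ξ : I → Bool) : condOne ν s ξ ≤ 1 :=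
  (div_le_one (add_pos (hν _) (hν _))).2 (le_add_of_nonneg_right (hν _).le)

end Helpers


section Main
variable {S : Type*} [Countable S] [DecidableEq S]

lemma main_minus (Sn : ℕ → Finset S)
    (hmonoSn : ∀ m n : ℕ, m ≤ n → Sn m ⊆ Sn n)
    (hcover : ∀ s : S, ∃ n, s ∈ Sn n)
    (ν₁ ν₂ : (n : ℕ) → (↥(Sn n) → Bool) → ℝ)
    (hν₁ : ∀ n, IsProbWeight (ν₁ n)) (hν₂ : ∀ n, IsProbWeight (ν₂ n))
    (hmono₁ : ∀ n, IsMonotoneWeight (ν₁ n))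
    (μ₁ μ₂ : Measure (S → Bool)) (hμ₁ : IsProbabilityMeasure μ₁)
    (hμ₂ : IsProbabilityMeasure μ₂)
    (hconv₁ : WeakConv (fun n => pushCfg (Sn n) (ν₁ n)) μ₁)
    (hconv₂ : WeakConv (fun n => pushCfg (Sn n) (ν₂ n)) μ₂)
    (ε : ℝ) (hε0 : 0 < ε) (hε1 : ε < 1)
    (hgap : ∀ n (s : ↥(Sn n)) (ξ : ↥(Sn n) → Bool),
      condOne (ν₁ n) s ξ + ε ≤ condOne (ν₂ n) s ξ)
    (ν : Measure (S → Bool)) (hνP : IsProbabilityMeasure ν) (hm : IsMinusEps μ₂ ν ε) :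
    StochDom μ₁ ν := by
  classical
  intro f hfc hfb hfm
  haveI := hμ₁; haveI := hμ₂; haveI := hνP
  obtain ⟨C, hC⟩ := hfb
  refine le_of_forall_pos_le_add fun δ hδ => ?_
  obtain ⟨G, hG⟩ := unif_approx hfc (half_pos hδ)
  set fG : (S → Bool) → ℝ := fun η => f (fun s => if s ∈ G then η s else false) with hfGdef
  have hfGapprox : ∀ η, |f η - fG η| ≤ δ / 2 := fun η =>
    hG η _ (fun s hs => (if_pos hs).symm)
  have hfGc : Continuous fG := by
    apply hfc.comp
    refine continuous_pi fun s => ?_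
    by_cases hs : s ∈ G
    · simp only [if_pos hs]
      exact continuous_apply s
    · simp only [if_neg hs]
      exact continuous_const
  have hfGm : Monotone fG := by
    intro η η' h
    refine hfm fun s => ?_
    dsimp only
    split
    · exact h s
    · exact le_rfl
  have hfGb : ∀ η, |fG η| ≤ C := fun η => hC _
  have hfGdep : ∀ η η' : S → Bool, (∀ s ∈ G, η s = η' s) → fG η = fG η' := by
    intro η η' h
    refine congrArg f (funext fun s => ?_)
    by_cases hs : s ∈ G
    · rw [if_pos hs, if_pos hs]; exact h s hs
    · rw [if_neg hs, if_neg hs]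
  obtain ⟨c, hc⟩ := span_cyl true G fG hfGdep
  set L := ∑ F ∈ G.powerset,
      c F * ((1 - ε) ^ F.card * (μ₂ {η | ∀ s ∈ F, η s = true}).toReal) with hLdef
  have hIntL : ∫ η, fG η ∂ν = L := by
    rw [show fG = fun η => ∑ F ∈ G.powerset, c F * cylFn true F η from funext hc]
    rw [integral_finset_sum _ (fun F _ =>
      (integrable_of_bounded (cylFn_continuous true F) (cylFn_bdd true F)).const_mul (c F))]
    refine Finset.sum_congr rfl fun F _ => ?_
    rw [integral_const_mul, integral_cylFn ν true F, hm F,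
      ENNReal.toReal_mul, ENNReal.toReal_ofReal (pow_nonneg (by linarith) _)]
  choose gidx hgidx using hcover
  set N := G.sup gidx with hNdef
  have hGN : ∀ n, N ≤ n → G ⊆ Sn n := fun n hn s hs =>
    hmonoSn _ _ (le_trans (Finset.le_sup hs) hn) (hgidx s)
  have hbF : ∀ F ∈ G.powerset, Tendsto
      (fun n => ∑ τ : ↥(Sn n) → Bool, minusW (ν₂ n) ε τ * cylFn true F (extendCfg (Sn n) τ))
      atTop (𝓝 ((1 - ε) ^ F.card * (μ₂ {η | ∀ s ∈ F, η s = true}).toReal)) := by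
    intro F hF
    rw [Finset.mem_powerset] at hF
    have htend : Tendsto
        (fun n => ∑ τ : ↥(Sn n) → Bool, (ν₂ n) τ * cylFn true F (extendCfg (Sn n) τ))
        atTop (𝓝 ((μ₂ {η | ∀ s ∈ F, η s = true}).toReal)) := by
      have h0 := hconv₂ (cylFn true F) (cylFn_continuous true F) ⟨1, cylFn_bdd true F⟩
      rw [integral_cylFn μ₂ true F] at h0
      refine h0.congr fun n => ?_
      exact integral_pushCfg (Sn n) (ν₂ n) (fun τ => ((hν₂ n).1 τ).le) _
        (cylFn_continuous true F) 1 (cylFn_bdd true F)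
    refine (htend.const_mul ((1 - ε) ^ F.card)).congr' ?_
    filter_upwards [eventually_ge_atTop N] with n hn
    have hFn : F ⊆ Sn n := hF.trans (hGN n hn)
    rw [sum_w_cylFn_ext F hFn, sum_w_cylFn_ext F hFn, minusW_cyl,
      card_subtype_of_subset hFn]
  have hseq : Tendsto
      (fun n => ∑ τ : ↥(Sn n) → Bool, minusW (ν₂ n) ε τ * fG (extendCfg (Sn n) τ))
      atTop (𝓝 L) := by
    have heq : ∀ n, ∑ τ : ↥(Sn n) → Bool, minusW (ν₂ n) ε τ * fG (extendCfg (Sn n) τ)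
        = ∑ F ∈ G.powerset, c F * ∑ τ : ↥(Sn n) → Bool,
            minusW (ν₂ n) ε τ * cylFn true F (extendCfg (Sn n) τ) := by
      intro n
      have e1 : ∀ τ : ↥(Sn n) → Bool, minusW (ν₂ n) ε τ * fG (extendCfg (Sn n) τ)
          = ∑ F ∈ G.powerset,
              c F * (minusW (ν₂ n) ε τ * cylFn true F (extendCfg (Sn n) τ)) := by
        intro τ
        rw [hc (extendCfg (Sn n) τ), Finset.mul_sum]
        exact Finset.sum_congr rfl fun F _ => by ring
      rw [Finset.sum_congr rfl fun τ _ => e1 τ, Finset.sum_comm]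
      exact Finset.sum_congr rfl fun F _ => by rw [← Finset.mul_sum]
    rw [hLdef]
    refine Tendsto.congr (fun n => (heq n).symm) ?_
    exact tendsto_finset_sum _ fun F hF => (hbF F hF).const_mul (c F)
  have hHolley : ∀ n, ∑ τ : ↥(Sn n) → Bool, (ν₁ n) τ * fG (extendCfg (Sn n) τ)
      ≤ ∑ τ : ↥(Sn n) → Bool, minusW (ν₂ n) ε τ * fG (extendCfg (Sn n) τ) := by
    intro n
    have hfin := findom (ν₁ n) (minusW (ν₂ n) ε) (hν₁ n).1
      (minusW_pos (hν₂ n).1 hε0 hε1)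
      (by rw [(hν₁ n).2, sum_minusW, (hν₂ n).2])
      (fun s ξ ζ hle => ss_minus (ν₁ n) (ν₂ n) (hν₁ n).1 (hν₂ n).1 (hmono₁ n) hε0 hε1
        (fun u ξ' => hgap n u ξ') s ξ ζ hle)
      (fun τ => fG (extendCfg (Sn n) τ) + C)
      (fun τ => by linarith [(abs_le.1 (hfGb (extendCfg (Sn n) τ))).1])
      (fun τ τ' h => by
        have := hfGm (extendCfg_mono (Sn n) h)
        dsimp only
        linarith)
    have e1 : ∀ w : (↥(Sn n) → Bool) → ℝ, ∑ τ : ↥(Sn n) → Bool, w τ = 1 →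
        ∑ τ : ↥(Sn n) → Bool, (fG (extendCfg (Sn n) τ) + C) * w τ
          = (∑ τ : ↥(Sn n) → Bool, w τ * fG (extendCfg (Sn n) τ)) + C := by
      intro w hw
      calc ∑ τ : ↥(Sn n) → Bool, (fG (extendCfg (Sn n) τ) + C) * w τ
          = ∑ τ : ↥(Sn n) → Bool, (w τ * fG (extendCfg (Sn n) τ) + C * w τ) :=
            Finset.sum_congr rfl fun τ _ => by ring
        _ = (∑ τ : ↥(Sn n) → Bool, w τ * fG (extendCfg (Sn n) τ))
              + C * ∑ τ : ↥(Sn n) → Bool, w τ := by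
            rw [Finset.sum_add_distrib, Finset.mul_sum]
        _ = _ := by rw [hw, mul_one]
    have ha := e1 (ν₁ n) (hν₁ n).2
    have hb := e1 (minusW (ν₂ n) ε) (by rw [sum_minusW, (hν₂ n).2])
    rw [ha, hb] at hfin
    linarith
  have hIntμ₁f : Integrable f μ₁ := integrable_of_bounded hfc hC
  have hIntμ₁fG : Integrable fG μ₁ := integrable_of_bounded hfGc hfGb
  have hIntνf : Integrable f ν := integrable_of_bounded hfc hC
  have hIntνfG : Integrable fG ν := integrable_of_bounded hfGc hfGb
  have h1 : ∫ x, f x ∂μ₁ ≤ ∫ x, fG x ∂μ₁ + δ / 2 := by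
    have hmono' : ∫ x, f x ∂μ₁ ≤ ∫ x, (fG x + δ / 2) ∂μ₁ :=
      integral_mono hIntμ₁f (hIntμ₁fG.add (integrable_const _))
        (fun x => by linarith [(abs_le.1 (hfGapprox x)).2])
    rwa [integral_add hIntμ₁fG (integrable_const _), integral_const, probReal_univ,
      one_smul] at hmono'
  have h4 : ∫ x, fG x ∂ν ≤ ∫ x, f x ∂ν + δ / 2 := by
    have hmono' : ∫ x, fG x ∂ν ≤ ∫ x, (f x + δ / 2) ∂ν :=
      integral_mono hIntνfG (hIntνf.add (integrable_const _))
        (fun x => by linarith [(abs_le.1 (hfGapprox x)).1])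
    rwa [integral_add hIntνf (integrable_const _), integral_const, probReal_univ,
      one_smul] at hmono'
  have h2 : ∫ x, fG x ∂μ₁ ≤ L := by
    refine le_of_tendsto_of_tendsto' (hconv₁ fG hfGc ⟨C, hfGb⟩) hseq (fun n => ?_)
    rw [integral_pushCfg (Sn n) (ν₁ n) (fun τ => ((hν₁ n).1 τ).le) fG hfGc C hfGb]
    exact hHolley n
  linarith

lemma main_plus (Sn : ℕ → Finset S)
    (hmonoSn : ∀ m n : ℕ, m ≤ n → Sn m ⊆ Sn n)
    (hcover : ∀ s : S, ∃ n, s ∈ Sn n)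
    (ν₁ ν₂ : (n : ℕ) → (↥(Sn n) → Bool) → ℝ)
    (hν₁ : ∀ n, IsProbWeight (ν₁ n)) (hν₂ : ∀ n, IsProbWeight (ν₂ n))
    (hmono₂ : ∀ n, IsMonotoneWeight (ν₂ n))
    (μ₁ μ₂ : Measure (S → Bool)) (hμ₁ : IsProbabilityMeasure μ₁)
    (hμ₂ : IsProbabilityMeasure μ₂)
    (hconv₁ : WeakConv (fun n => pushCfg (Sn n) (ν₁ n)) μ₁)
    (hconv₂ : WeakConv (fun n => pushCfg (Sn n) (ν₂ n)) μ₂)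
    (ε : ℝ) (hε0 : 0 < ε) (hε1 : ε < 1)
    (hgap : ∀ n (s : ↥(Sn n)) (ξ : ↥(Sn n) → Bool),
      condOne (ν₁ n) s ξ + ε ≤ condOne (ν₂ n) s ξ)
    (ν' : Measure (S → Bool)) (hνP : IsProbabilityMeasure ν') (hm : IsPlusEps μ₁ ν' ε) :
    StochDom ν' μ₂ := by
  classical
  intro f hfc hfb hfm
  haveI := hμ₁; haveI := hμ₂; haveI := hνP
  obtain ⟨C, hC⟩ := hfb
  refine le_of_forall_pos_le_add fun δ hδ => ?_
  obtain ⟨G, hG⟩ := unif_approx hfc (half_pos hδ)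
  set fG : (S → Bool) → ℝ := fun η => f (fun s => if s ∈ G then η s else false) with hfGdef
  have hfGapprox : ∀ η, |f η - fG η| ≤ δ / 2 := fun η =>
    hG η _ (fun s hs => (if_pos hs).symm)
  have hfGc : Continuous fG := by
    apply hfc.comp
    refine continuous_pi fun s => ?_
    by_cases hs : s ∈ G
    · simp only [if_pos hs]
      exact continuous_apply s
    · simp only [if_neg hs]
      exact continuous_const
  have hfGm : Monotone fG := by
    intro η η' h
    refine hfm fun s => ?_
    dsimp only
    split
    · exact h s
    · exact le_rfl
  have hfGb : ∀ η, |fG η| ≤ C := fun η => hC _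
  have hfGdep : ∀ η η' : S → Bool, (∀ s ∈ G, η s = η' s) → fG η = fG η' := by
    intro η η' h
    refine congrArg f (funext fun s => ?_)
    by_cases hs : s ∈ G
    · rw [if_pos hs, if_pos hs]; exact h s hs
    · rw [if_neg hs, if_neg hs]
  obtain ⟨c, hc⟩ := span_cyl false G fG hfGdep
  set L := ∑ F ∈ G.powerset,
      c F * ((1 - ε) ^ F.card * (μ₁ {η | ∀ s ∈ F, η s = false}).toReal) with hLdef
  have hIntL : ∫ η, fG η ∂ν' = L := by
    rw [show fG = fun η => ∑ F ∈ G.powerset, c F * cylFn false F η from funext hc]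
    rw [integral_finset_sum _ (fun F _ =>
      (integrable_of_bounded (cylFn_continuous false F) (cylFn_bdd false F)).const_mul (c F))]
    refine Finset.sum_congr rfl fun F _ => ?_
    rw [integral_const_mul, integral_cylFn ν' false F, hm F,
      ENNReal.toReal_mul, ENNReal.toReal_ofReal (pow_nonneg (by linarith) _)]
  choose gidx hgidx using hcover
  set N := G.sup gidx with hNdef
  have hGN : ∀ n, N ≤ n → G ⊆ Sn n := fun n hn s hs =>
    hmonoSn _ _ (le_trans (Finset.le_sup hs) hn) (hgidx s)
  have hbF : ∀ F ∈ G.powerset, Tendsto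
      (fun n => ∑ τ : ↥(Sn n) → Bool, plusW (ν₁ n) ε τ * cylFn false F (extendCfg (Sn n) τ))
      atTop (𝓝 ((1 - ε) ^ F.card * (μ₁ {η | ∀ s ∈ F, η s = false}).toReal)) := by
    intro F hF
    rw [Finset.mem_powerset] at hF
    have htend : Tendsto
        (fun n => ∑ τ : ↥(Sn n) → Bool, (ν₁ n) τ * cylFn false F (extendCfg (Sn n) τ))
        atTop (𝓝 ((μ₁ {η | ∀ s ∈ F, η s = false}).toReal)) := by
      have h0 := hconv₁ (cylFn false F) (cylFn_continuous false F) ⟨1, cylFn_bdd false F⟩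
      rw [integral_cylFn μ₁ false F] at h0
      refine h0.congr fun n => ?_
      exact integral_pushCfg (Sn n) (ν₁ n) (fun τ => ((hν₁ n).1 τ).le) _
        (cylFn_continuous false F) 1 (cylFn_bdd false F)
    refine (htend.const_mul ((1 - ε) ^ F.card)).congr' ?_
    filter_upwards [eventually_ge_atTop N] with n hn
    have hFn : F ⊆ Sn n := hF.trans (hGN n hn)
    rw [sum_w_cylFn_ext F hFn, sum_w_cylFn_ext F hFn, plusW_cyl,
      card_subtype_of_subset hFn]
  have hseq : Tendsto
      (fun n => ∑ τ : ↥(Sn n) → Bool, plusW (ν₁ n) ε τ * fG (extendCfg (Sn n) τ))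
      atTop (𝓝 L) := by
    have heq : ∀ n, ∑ τ : ↥(Sn n) → Bool, plusW (ν₁ n) ε τ * fG (extendCfg (Sn n) τ)
        = ∑ F ∈ G.powerset, c F * ∑ τ : ↥(Sn n) → Bool,
            plusW (ν₁ n) ε τ * cylFn false F (extendCfg (Sn n) τ) := by
      intro n
      have e1 : ∀ τ : ↥(Sn n) → Bool, plusW (ν₁ n) ε τ * fG (extendCfg (Sn n) τ)
          = ∑ F ∈ G.powerset,
              c F * (plusW (ν₁ n) ε τ * cylFn false F (extendCfg (Sn n) τ)) := by
        intro τ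
        rw [hc (extendCfg (Sn n) τ), Finset.mul_sum]
        exact Finset.sum_congr rfl fun F _ => by ring
      rw [Finset.sum_congr rfl fun τ _ => e1 τ, Finset.sum_comm]
      exact Finset.sum_congr rfl fun F _ => by rw [← Finset.mul_sum]
    rw [hLdef]
    refine Tendsto.congr (fun n => (heq n).symm) ?_
    exact tendsto_finset_sum _ fun F hF => (hbF F hF).const_mul (c F)
  have hHolley : ∀ n, ∑ τ : ↥(Sn n) → Bool, plusW (ν₁ n) ε τ * fG (extendCfg (Sn n) τ)
      ≤ ∑ τ : ↥(Sn n) → Bool, (ν₂ n) τ * fG (extendCfg (Sn n) τ) := by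
    intro n
    have hfin := findom (plusW (ν₁ n) ε) (ν₂ n)
      (plusW_pos (hν₁ n).1 hε0 hε1) (hν₂ n).1
      (by rw [sum_plusW, (hν₁ n).2, (hν₂ n).2])
      (fun s ξ ζ hle => ss_plus (ν₁ n) (ν₂ n) (hν₁ n).1 (hν₂ n).1 (hmono₂ n) hε0 hε1
        (fun u ξ' => hgap n u ξ') s ξ ζ hle)
      (fun τ => fG (extendCfg (Sn n) τ) + C)
      (fun τ => by linarith [(abs_le.1 (hfGb (extendCfg (Sn n) τ))).1])
      (fun τ τ' h => by
        have := hfGm (extendCfg_mono (Sn n) h)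
        dsimp only
        linarith)
    have e1 : ∀ w : (↥(Sn n) → Bool) → ℝ, ∑ τ : ↥(Sn n) → Bool, w τ = 1 →
        ∑ τ : ↥(Sn n) → Bool, (fG (extendCfg (Sn n) τ) + C) * w τ
          = (∑ τ : ↥(Sn n) → Bool, w τ * fG (extendCfg (Sn n) τ)) + C := by
      intro w hw
      calc ∑ τ : ↥(Sn n) → Bool, (fG (extendCfg (Sn n) τ) + C) * w τ
          = ∑ τ : ↥(Sn n) → Bool, (w τ * fG (extendCfg (Sn n) τ) + C * w τ) :=
            Finset.sum_congr rfl fun τ _ => by ring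
        _ = (∑ τ : ↥(Sn n) → Bool, w τ * fG (extendCfg (Sn n) τ))
              + C * ∑ τ : ↥(Sn n) → Bool, w τ := by
            rw [Finset.sum_add_distrib, Finset.mul_sum]
        _ = _ := by rw [hw, mul_one]
    have ha := e1 (plusW (ν₁ n) ε) (by rw [sum_plusW, (hν₁ n).2])
    have hb := e1 (ν₂ n) (hν₂ n).2
    rw [ha, hb] at hfin
    linarith
  have hIntμ₂f : Integrable f μ₂ := integrable_of_bounded hfc hC
  have hIntμ₂fG : Integrable fG μ₂ := integrable_of_bounded hfGc hfGb
  have hIntνf : Integrable f ν' := integrable_of_bounded hfc hC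
  have hIntνfG : Integrable fG ν' := integrable_of_bounded hfGc hfGb
  have h1 : ∫ x, f x ∂ν' ≤ ∫ x, fG x ∂ν' + δ / 2 := by
    have hmono' : ∫ x, f x ∂ν' ≤ ∫ x, (fG x + δ / 2) ∂ν' :=
      integral_mono hIntνf (hIntνfG.add (integrable_const _))
        (fun x => by linarith [(abs_le.1 (hfGapprox x)).2])
    rwa [integral_add hIntνfG (integrable_const _), integral_const, probReal_univ,
      one_smul] at hmono'
  have h4 : ∫ x, fG x ∂μ₂ ≤ ∫ x, f x ∂μ₂ + δ / 2 := by
    have hmono' : ∫ x, fG x ∂μ₂ ≤ ∫ x, (f x + δ / 2) ∂μ₂ :=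
      integral_mono hIntμ₂fG (hIntμ₂f.add (integrable_const _))
        (fun x => by linarith [(abs_le.1 (hfGapprox x)).1])
    rwa [integral_add hIntμ₂f (integrable_const _), integral_const, probReal_univ,
      one_smul] at hmono'
  have h2 : L ≤ ∫ x, fG x ∂μ₂ := by
    refine le_of_tendsto_of_tendsto' hseq (hconv₂ fG hfGc ⟨C, hfGb⟩) (fun n => ?_)
    rw [integral_pushCfg (Sn n) (ν₂ n) (fun τ => ((hν₂ n).1 τ).le) fG hfGc C hfGb]
    exact hHolley n
  linarith

end Main

theorem prop_3_4 (Sn : ℕ → Finset S) (hchain : ∀ n, Sn n ⊆ Sn (n + 1))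
    (hcover : ∀ s : S, ∃ n, s ∈ Sn n)
    (ν₁ ν₂ : (n : ℕ) → (↥(Sn n) → Bool) → ℝ)
    (hν₁ : ∀ n, IsProbWeight (ν₁ n)) (hν₂ : ∀ n, IsProbWeight (ν₂ n))
    (hmono₁ : ∀ n, IsMonotoneWeight (ν₁ n)) (hmono₂ : ∀ n, IsMonotoneWeight (ν₂ n))
    (μ₁ μ₂ : Measure (S → Bool)) (hμ₁ : IsProbabilityMeasure μ₁)
    (hμ₂ : IsProbabilityMeasure μ₂)
    (hconv₁ : WeakConv (fun n => pushCfg (Sn n) (ν₁ n)) μ₁)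
    (hconv₂ : WeakConv (fun n => pushCfg (Sn n) (ν₂ n)) μ₂)
    (hA : 0 < ⨅ n : ℕ, sInf {x : ℝ | ∃ (s : ↥(Sn n)) (ξ : ↥(Sn n) → Bool),
            x = condOne (ν₂ n) s ξ - condOne (ν₁ n) s ξ}) :
    ∃ ε : ℝ, 0 < ε ∧ ε ≤ 1 ∧
      (∀ ν : Measure (S → Bool), IsProbabilityMeasure ν → IsMinusEps μ₂ ν ε →
        StochDom μ₁ ν) ∧
      (∀ ν' : Measure (S → Bool), IsProbabilityMeasure ν' → IsPlusEps μ₁ ν' ε →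
        StochDom ν' μ₂) := by
  classical
  set A := ⨅ n : ℕ, sInf {x : ℝ | ∃ (s : ↥(Sn n)) (ξ : ↥(Sn n) → Bool),
      x = condOne (ν₂ n) s ξ - condOne (ν₁ n) s ξ} with hAdef
  have hA0 : 0 < A := hA
  set ε := min (A / 2) (1 / 2) with hεdef
  have hε0 : 0 < ε := lt_min (by linarith) (by norm_num)
  have hε1 : ε < 1 := lt_of_le_of_lt (min_le_right _ _) (by norm_num)
  have hεA : ε ≤ A := le_trans (min_le_left _ _) (by linarith)
  have hmonoSn : ∀ m n : ℕ, m ≤ n → Sn m ⊆ Sn n := by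
    have hm : Monotone Sn := monotone_nat_of_le_succ fun k => Finset.le_iff_subset.2 (hchain k)
    exact fun m n h => Finset.le_iff_subset.1 (hm h)
  have hgap : ∀ n (s : ↥(Sn n)) (ξ : ↥(Sn n) → Bool),
      condOne (ν₁ n) s ξ + ε ≤ condOne (ν₂ n) s ξ := by
    intro n s ξ
    have hmem : condOne (ν₂ n) s ξ - condOne (ν₁ n) s ξ
        ∈ {x : ℝ | ∃ (s : ↥(Sn n)) (ξ : ↥(Sn n) → Bool),
            x = condOne (ν₂ n) s ξ - condOne (ν₁ n) s ξ} := ⟨s, ξ, rfl⟩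
    have hbdd : ∀ m : ℕ, BddBelow {x : ℝ | ∃ (s : ↥(Sn m)) (ξ : ↥(Sn m) → Bool),
        x = condOne (ν₂ m) s ξ - condOne (ν₁ m) s ξ} := by
      intro m
      refine ⟨-1, ?_⟩
      rintro x ⟨s', ξ', rfl⟩
      have h1 := condOne_nonneg (hν₂ m).1 s' ξ'
      have h2 := condOne_le_one (hν₁ m).1 s' ξ'
      linarith
    have hrangebdd : BddBelow (Set.range fun m : ℕ =>
        sInf {x : ℝ | ∃ (s : ↥(Sn m)) (ξ : ↥(Sn m) → Bool),
          x = condOne (ν₂ m) s ξ - condOne (ν₁ m) s ξ}) := by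
      refine ⟨-1, ?_⟩
      rintro y ⟨m, rfl⟩
      dsimp only
      by_cases hne : {x : ℝ | ∃ (s : ↥(Sn m)) (ξ : ↥(Sn m) → Bool),
          x = condOne (ν₂ m) s ξ - condOne (ν₁ m) s ξ}.Nonempty
      · refine le_csInf hne ?_
        rintro x ⟨s', ξ', rfl⟩
        have h1 := condOne_nonneg (hν₂ m).1 s' ξ'
        have h2 := condOne_le_one (hν₁ m).1 s' ξ'
        linarith
      · rw [Set.not_nonempty_iff_eq_empty.1 hne, Real.sInf_empty]
        norm_num
    have hAle : A ≤ sInf {x : ℝ | ∃ (s : ↥(Sn n)) (ξ : ↥(Sn n) → Bool),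
        x = condOne (ν₂ n) s ξ - condOne (ν₁ n) s ξ} := ciInf_le hrangebdd n
    have hsle : sInf {x : ℝ | ∃ (s : ↥(Sn n)) (ξ : ↥(Sn n) → Bool),
        x = condOne (ν₂ n) s ξ - condOne (ν₁ n) s ξ}
          ≤ condOne (ν₂ n) s ξ - condOne (ν₁ n) s ξ := csInf_le (hbdd n) hmem
    linarith
  refine ⟨ε, hε0, hε1.le, ?_, ?_⟩
  · intro ν hνP hminus
    exact main_minus Sn hmonoSn hcover ν₁ ν₂ hν₁ hν₂ hmono₁ μ₁ μ₂ hμ₁ hμ₂ hconv₁ hconv₂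
      ε hε0 hε1 hgap ν hνP hminus
  · intro ν' hνP hplus
    exact main_plus Sn hmonoSn hcover ν₁ ν₂ hν₁ hν₂ hmono₂ μ₁ μ₂ hμ₁ hμ₂ hconv₁ hconv₂
      ε hε0 hε1 hgap ν' hνP hplus
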